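/- Necessity of enhanced message chains for information transfer: Let f ≥ 0, let Q be a deterministic protocol, let r ∈ R(Q,γ^f), and let m ∈ ℕ. If K_d(v_s = 1) holds at (r,m), then there is an enhanced message chain from ⟨s,0⟩ to ⟨d,m⟩ in r. -/
import Mathlib


namespace NullMessages

/-- Global parameters of the synchronous crash-failure model `γ^f`:
`N > 2` processes (`Fin N`), a source `s`, a destination `d`, a directed
communication network `chan`, a bound `f` on the number of crashes per run,
and fixed initial values `vOther` for the processes other than `s`. -/
structure Params where
  N : ℕ
  N_gt : 2 < N
  s : Fin N
  d : Fin N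
  sd_ne : s ≠ d
  chan : Fin N → Fin N → Bool
  f : ℕ
  vOther : Fin N → Bool

/-- A failure pattern: `fp q = some (t, Bl)` says that `q` crashes at time `t`,
and in its crash round its message to `p` is sent iff `p ∉ Bl`.
At most `f` processes fail. -/
structure FPat (P : Params) where
  fp : Fin P.N → Option (ℕ × Finset (Fin P.N))
  card_le : (Finset.univ.filter fun q => (fp q).isSome).card ≤ P.f

/-- The set of processes that fail in a failure pattern. -/
def FPat.F {P : Params} (FP : FPat P) : Finset (Fin P.N) :=
  Finset.univ.filter fun q => (FP.fp q).isSome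

/-- A run of a (deterministic) protocol is uniquely determined by the
initial value `v_s` of the source and a failure pattern. -/
abbrev Run (P : Params) := Bool × FPat P

/-- Process-time nodes `⟨p,t⟩`. -/
abbrev Node (P : Params) := Fin P.N × ℕ

/-- An event observed by a process in one round: the messages it sent and
the messages it received (indexed by the other endpoint of the channel). -/
structure Event (P : Params) (Msg : Type) where
  sent : Fin P.N → Option Msg
  rcvd : Fin P.N → Option Msg

/-- A local state: the process's initial value together with the sequence of
events it has observed so far (the current time is the length of that list). -/
abbrev LState (P : Params) (Msg : Type) := Bool × List (Event P Msg)

/-- A deterministic protocol: as a function of the local state, which message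
(if any) to send to each process, and which actions (named by `ℕ`) to perform. -/
structure Protocol (P : Params) (Msg : Type) where
  send : LState P Msg → Fin P.N → Option Msg
  act : LState P Msg → Set ℕ

/-- The initial value of process `p` when the source's value is `b`. -/
def initVal (P : Params) (b : Bool) (p : Fin P.N) : Bool :=
  if p = P.s then b else P.vOther p

/-- The message actually sent from `i` to `j` at time `t` (i.e. in round `t+1`)
in run `r`, given the local states `σ` at time `t`: the prescribed message,
except that a process sends nothing after its crash time, and at its crash time
its message to `j` is suppressed iff `j` is in its blocked set. -/
def sendRound (P : Params) {Msg : Type} (Q : Protocol P Msg) (r : Run P)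
    (σ : Fin P.N → LState P Msg) (t : ℕ) (i j : Fin P.N) : Option Msg :=
  if P.chan i j then
    match r.2.fp i with
    | none => Q.send (σ i) j
    | some x =>
        if t < x.1 then Q.send (σ i) j
        else if t = x.1 then (if j ∈ x.2 then none else Q.send (σ i) j)
        else none
  else none

/-- One synchronous step of process `p`'s local state. -/
def stepState (P : Params) {Msg : Type} (Q : Protocol P Msg) (r : Run P)
    (σ : Fin P.N → LState P Msg) (t : ℕ) (p : Fin P.N) : LState P Msg :=
  ((σ p).1,
    (σ p).2 ++ [⟨fun j => sendRound P Q r σ t p j, fun j => sendRound P Q r σ t j p⟩])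

/-- The local state `r_p(t)` of each process `p` at each time `t` in run `r`
of protocol `Q`.  A crashed process is inactive (its state is frozen) from the
round after its crash on. -/
def stateAt (P : Params) {Msg : Type} (Q : Protocol P Msg) (r : Run P) :
    ℕ → Fin P.N → LState P Msg
  | 0 => fun p => (initVal P r.1 p, [])
  | t + 1 => fun p =>
      let σ := stateAt P Q r t
      match r.2.fp p with
      | some x => if x.1 ≤ t then σ p else stepState P Q r σ t p
      | none => stepState P Q r σ t p

/-- The message (if any) actually sent from `i` to `j` at time `t` in run `r`. -/
def msgSent (P : Params) {Msg : Type} (Q : Protocol P Msg) (r : Run P)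
    (i j : Fin P.N) (t : ℕ) : Option Msg :=
  sendRound P Q r (stateAt P Q r t) t i j

/-- `i` sends an actual message to `j` at `(r,t)`. -/
def SendsActual (P : Params) {Msg : Type} (Q : Protocol P Msg) (r : Run P)
    (i j : Fin P.N) (t : ℕ) : Prop :=
  (msgSent P Q r i j t).isSome

/-- The channel from `i` to `j` is blocked at `(r,t)`: `i` fails at some time
`t' < t`, or at time `t' = t` with `j` in its blocked set. -/
def BlockedAt (P : Params) (r : Run P) (i j : Fin P.N) (t : ℕ) : Prop :=
  ∃ x ∈ r.2.fp i, x.1 < t ∨ (x.1 = t ∧ j ∈ x.2)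

/-- `i` sends `j` a *null message* at `(r,t)`: the channel is not blocked,
`i` sends no actual message to `j` at `(r,t)`, and in some run `r'` of the
same protocol `i` does send `j` an actual message at time `t`. -/
def SendsNull (P : Params) {Msg : Type} (Q : Protocol P Msg) (r : Run P)
    (i j : Fin P.N) (t : ℕ) : Prop :=
  ¬ BlockedAt P r i j t ∧ ¬ SendsActual P Q r i j t ∧
    ∃ r' : Run P, SendsActual P Q r' i j t

/-- `i` sends `j` an actual message or a null message at `(r,t)`. -/
def SendsE (P : Params) {Msg : Type} (Q : Protocol P Msg) (r : Run P)
    (i j : Fin P.N) (t : ℕ) : Prop :=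
  SendsActual P Q r i j t ∨ SendsNull P Q r i j t

/-- An *enhanced message chain* `θ ⇝ θ'` in run `r`: processes
`p = i₁, …, i_k = q` and times `t ≤ t₁ < ⋯ < t_k = t'` such that each `i_h`
sends an actual or null message to `i_{h+1}` at `(r,t_h)`. -/
inductive Chain (P : Params) {Msg : Type} (Q : Protocol P Msg) (r : Run P) :
    Node P → Node P → Prop
  | wait {p : Fin P.N} {t t' : ℕ} (h : t ≤ t') : Chain P Q r (p, t) (p, t')
  | step {p j q : Fin P.N} {t u t' : ℕ} (h1 : t ≤ u) (h2 : SendsE P Q r p j u)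
      (h3 : Chain P Q r (j, u + 1) (q, t')) : Chain P Q r (p, t) (q, t')

/-- Knowledge: `K_i φ` holds at `(r,m)` iff `φ` holds at `(r',m)` for every run
`r'` of the protocol that is indistinguishable from `r` to `i` at time `m`. -/
def Kn (P : Params) {Msg : Type} (Q : Protocol P Msg) (i : Fin P.N)
    (φ : Run P → ℕ → Prop) (r : Run P) (m : ℕ) : Prop :=
  ∀ r' : Run P, stateAt P Q r' m i = stateAt P Q r m i → φ r' m

/-- Process `i` performs action `α` at time `m` in run `r`: the protocol
prescribes `α` in `i`'s current local state and `i` has not yet reached its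
crash round (a crashing process performs no actions in its crash round). -/
def Performs (P : Params) {Msg : Type} (Q : Protocol P Msg) (r : Run P)
    (i : Fin P.N) (α : ℕ) (m : ℕ) : Prop :=
  (∀ x ∈ r.2.fp i, m < x.1) ∧ α ∈ Q.act (stateAt P Q r m i)

/-- Local edges of the communication graph. -/
def El (P : Params) (u v : Node P) : Prop := v.1 = u.1 ∧ v.2 = u.2 + 1

/-- Actual-message edges of the communication graph `CG_Q(r)`. -/
def Ea (P : Params) {Msg : Type} (Q : Protocol P Msg) (r : Run P)
    (u v : Node P) : Prop :=
  SendsActual P Q r u.1 v.1 u.2 ∧ v.2 = u.2 + 1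

/-- Null-message edges of the communication graph `CG_Q(r)`. -/
def En (P : Params) {Msg : Type} (Q : Protocol P Msg) (r : Run P)
    (u v : Node P) : Prop :=
  SendsNull P Q r u.1 v.1 u.2 ∧ v.2 = u.2 + 1

/-- Edges of the communication graph `CG_Q(r)`. -/
def Edge (P : Params) {Msg : Type} (Q : Protocol P Msg) (r : Run P)
    (u v : Node P) : Prop :=
  El P u v ∨ Ea P Q r u v ∨ En P Q r u v

/-- `π` is a path from `θ` to `θ'` in the communication graph `CG_Q(r)`. -/
def IsPath (P : Params) {Msg : Type} (Q : Protocol P Msg) (r : Run P)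
    (π : List (Node P)) (θ θ' : Node P) : Prop :=
  π.head? = some θ ∧ π.getLast? = some θ' ∧ π.Chain' (Edge P Q r)

/-- `π` is a *B null free* path: each of its edges is a local edge, an
actual-message edge, or a null-message edge whose sender is not in `B`. -/
def BNullFree (P : Params) {Msg : Type} (Q : Protocol P Msg) (r : Run P)
    (B : Set (Fin P.N)) (π : List (Node P)) : Prop :=
  π.Chain' fun u v => El P u v ∨ Ea P Q r u v ∨ (En P Q r u v ∧ u.1 ∉ B)

/-- `π` is an actual message chain (a path using only local and
actual-message edges) from `θ` to `θ'` in `CG_Q(r)`. -/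
def IsActualPath (P : Params) {Msg : Type} (Q : Protocol P Msg) (r : Run P)
    (π : List (Node P)) (θ θ' : Node P) : Prop :=
  π.head? = some θ ∧ π.getLast? = some θ' ∧
    π.Chain' fun u v => El P u v ∨ Ea P Q r u v

/-- There is an actual message chain from `θ` to `θ'` in `r`. -/
def ActualChain (P : Params) {Msg : Type} (Q : Protocol P Msg) (r : Run P)
    (θ θ' : Node P) : Prop :=
  ∃ π : List (Node P), IsActualPath P Q r π θ θ'

/-- An *n-resilient message block* from `θ` to `θ'` in `CG_Q(r)`: a set `Γ` of
paths from `θ` to `θ'` such that for every set `B` of at most `n` processes,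
`Γ` contains a `B` null free path. -/
def ResBlockN (P : Params) {Msg : Type} (Q : Protocol P Msg) (r : Run P)
    (n : ℕ) (θ θ' : Node P) (Γ : Set (List (Node P))) : Prop :=
  (∀ π ∈ Γ, IsPath P Q r π θ θ') ∧
    ∀ B : Finset (Fin P.N), B.card ≤ n → ∃ π ∈ Γ, BNullFree P Q r (↑B) π

/-- An *(f/failed)-resilient message block* from `θ` to `θ'` in `CG_Q(r)`:
a set `Γ` of paths from `θ` to `θ'` such that for every set `B` of processes
with `|B ∪ 𝔽^r| ≤ f`, `Γ` contains a `B` null free path. -/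
def ResBlockFFailed (P : Params) {Msg : Type} (Q : Protocol P Msg) (r : Run P)
    (θ θ' : Node P) (Γ : Set (List (Node P))) : Prop :=
  (∀ π ∈ Γ, IsPath P Q r π θ θ') ∧
    ∀ B : Finset (Fin P.N), (B ∪ r.2.F).card ≤ P.f →
      ∃ π ∈ Γ, BNullFree P Q r (↑B) π

/-- The empty failure pattern. -/
def nicePat (P : Params) : FPat P :=
  ⟨fun _ => none, by simp⟩

/-- The *nice run* `r̂(Q)`: `v_s = 1` and no process fails. -/
def niceRun (P : Params) : Run P := (true, nicePat P)

/-- `i` sends a null message to `j` at time `t` *in case* `φ`: in every run in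
which the channel from `i` to `j` is not blocked at time `t`, `i` sends `j` a
null message at time `t` iff `φ` holds there. -/
def NullInCase (P : Params) {Msg : Type} (Q : Protocol P Msg)
    (i j : Fin P.N) (t : ℕ) (φ : Run P → ℕ → Prop) : Prop :=
  ∀ r : Run P, ¬ BlockedAt P r i j t → (SendsNull P Q r i j t ↔ φ r t)

/-- A *Nice-based Message (NbM)* protocol: all actual messages are single-bit;
a process sends '0' (`false`) iff it knows the run is not nice and '1' (`true`)
otherwise; and every null message is a null message in case the sender does not
know that the run is not nice. -/
def NbM (P : Params) (Q : Protocol P Bool) : Prop :=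
  (∀ (r : Run P) (i j : Fin P.N) (t : ℕ) (b : Bool),
      msgSent P Q r i j t = some b →
        (b = false ↔ Kn P Q i (fun r' _ => r' ≠ niceRun P) r t)) ∧
  (∀ (i j : Fin P.N) (t : ℕ), (∃ r : Run P, SendsNull P Q r i j t) →
      NullInCase P Q i j t fun r' u =>
        ¬ Kn P Q i (fun r'' _ => r'' ≠ niceRun P) r' u)

/-- The fact `v_s ≠ 1 ∨ s is faulty`. -/
def BadFact (P : Params) : Run P → ℕ → Prop :=
  fun r' _ => r'.1 ≠ true ∨ (r'.2.fp P.s).isSome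

/-- A *Robust-based Message (RbM)* protocol: all actual messages are single-bit;
a process sends '0' (`false`) iff it knows `v_s ≠ 1 ∨ s is faulty` and '1'
(`true`) otherwise; every null message is a null message in case the sender
does not know `v_s ≠ 1 ∨ s is faulty`; and every actual message of the nice
run is also sent in any run in which the corresponding channel is unblocked. -/
def RbM (P : Params) (Q : Protocol P Bool) : Prop :=
  (∀ (r : Run P) (i j : Fin P.N) (t : ℕ) (b : Bool),
      msgSent P Q r i j t = some b → (b = false ↔ Kn P Q i (BadFact P) r t)) ∧
  (∀ (i j : Fin P.N) (t : ℕ), (∃ r : Run P, SendsNull P Q r i j t) →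
      NullInCase P Q i j t fun r' u => ¬ Kn P Q i (BadFact P) r' u) ∧
  (∀ (r : Run P) (t : ℕ) (p q : Fin P.N),
      SendsActual P Q (niceRun P) p q t → ¬ BlockedAt P r p q t →
        SendsActual P Q r p q t)

/-- Action `α` of process `i` has (already) been performed by time `t` in `r`. -/
def PerformedBy (P : Params) {Msg : Type} (Q : Protocol P Msg) (r : Run P)
    (i : Fin P.N) (α : ℕ) (t : ℕ) : Prop :=
  ∃ u ≤ t, Performs P Q r i α u

/-- `Q` is consistent with the Ordered Response instance
`⟨v_s = 1, a_1, …, a_k⟩` (action `a h` is assigned to process `ip h`):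
`a h` is performed only if `v_s = 1` and all earlier actions have been
performed. -/
def ConsistentOR (P : Params) {Msg : Type} (Q : Protocol P Msg) {k : ℕ}
    (ip : Fin k → Fin P.N) (a : Fin k → ℕ) : Prop :=
  ∀ (r : Run P) (h : Fin k) (t : ℕ), Performs P Q r (ip h) (a h) t →
    r.1 = true ∧ ∀ g : Fin k, g < h → PerformedBy P Q r (ip g) (a g) t

/-- `Q` solves the Ordered Response instance: it is consistent with it and all
the actions are performed in `Q`'s nice run. -/
def SolvesOR (P : Params) {Msg : Type} (Q : Protocol P Msg) {k : ℕ}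
    (ip : Fin k → Fin P.N) (a : Fin k → ℕ) : Prop :=
  ConsistentOR P Q ip a ∧
    ∀ h : Fin k, ∃ t : ℕ, Performs P Q (niceRun P) (ip h) (a h) t

/-- `Q` solves Robust Information Transfer between `s` and `d`: in every run in
which `v_s = 1` and `s` does not fail, eventually `d` knows that `v_s = 1`. -/
def SolvesRobustIT (P : Params) {Msg : Type} (Q : Protocol P Msg) : Prop :=
  ∀ r : Run P, r.1 = true → r.2.fp P.s = none →
    ∃ m : ℕ, Kn P Q P.d (fun r' _ => r'.1 = true) r m

/-- Process `p` occurs as the sender of an actual or null message on path `π`. -/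
def SendsOn (P : Params) {Msg : Type} (Q : Protocol P Msg) (r : Run P)
    (π : List (Node P)) (p : Fin P.N) : Prop :=
  ∃ e ∈ π.zip π.tail, e.1.1 = p ∧ (Ea P Q r e.1 e.2 ∨ En P Q r e.1 e.2)

/-- The failure pattern `FP` is compatible with the run `r` (of protocol `Q`):
exactly the processes of `FP` fail in `r`, at the times `FP` specifies, and in
the crash round of a failing process `q`, the message prescribed by `Q` from
`q` to `p` is sent iff `p` is not in `q`'s blocked set. -/
def Compatible (P : Params) {Msg : Type} (Q : Protocol P Msg) (r : Run P)
    (FP : FPat P) : Prop :=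
  (∀ q : Fin P.N, (FP.fp q).isSome ↔ (r.2.fp q).isSome) ∧
  (∀ q : Fin P.N, ∀ x ∈ FP.fp q, ∀ y ∈ r.2.fp q, x.1 = y.1) ∧
  (∀ q : Fin P.N, ∀ x ∈ FP.fp q, ∀ p : Fin P.N,
    (P.chan q p = true ∧ (Q.send (stateAt P Q r x.1 q) p).isSome) →
      ((msgSent P Q r q p x.1).isSome ↔ p ∉ x.2))

/-- `FP'` is *harsher* than `FP` (written `FP' ≤ FP`): every process failing in
`FP` fails in `FP'`, either strictly earlier or at the same time with a larger
blocked set. -/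
def Harsher (P : Params) (FP' FP : FPat P) : Prop :=
  (∀ q : Fin P.N, (FP.fp q).isSome → (FP'.fp q).isSome) ∧
  ∀ q : Fin P.N, ∀ x ∈ FP.fp q, ∀ x' ∈ FP'.fp q,
    x'.1 < x.1 ∨ (x'.1 = x.1 ∧ x.2 ⊆ x'.2)

/-- `FP` is the minimal failure pattern w.r.t. `r`: it is compatible with `r`
and every compatible pattern of which it is a harsher variant equals it. -/
def MinimalFP (P : Params) {Msg : Type} (Q : Protocol P Msg) (r : Run P)
    (FP : FPat P) : Prop :=
  Compatible P Q r FP ∧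
    ∀ FP' : FPat P, Compatible P Q r FP' → Harsher P FP FP' → FP' = FP

/-- **Necessity of enhanced message chains.**  If `K_d(v_s = 1)` holds at
`(r,m)`, then there is an enhanced message chain from `⟨s,0⟩` to `⟨d,m⟩` in `r`. -/
lemma chain_mono {P : Params} {Msg : Type} {Q : Protocol P Msg} {r : Run P}
    {a b : Node P} (h : Chain P Q r a b) {t' : ℕ} (hle : b.2 ≤ t') :
    Chain P Q r a (b.1, t') := by
  induction h with
  | wait h => exact Chain.wait (le_trans h hle)
  | step h1 h2 h3 ih => exact Chain.step h1 h2 (ih hle)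

lemma chain_snoc {P : Params} {Msg : Type} {Q : Protocol P Msg} {r : Run P}
    {a b : Node P} (h : Chain P Q r a b) {p : Fin P.N}
    (hs : SendsE P Q r b.1 p b.2) : Chain P Q r a (p, b.2 + 1) := by
  induction h with
  | wait hle => exact Chain.step hle hs (Chain.wait le_rfl)
  | step h1 h2 h3 ih => exact Chain.step h1 h2 (ih hs)

lemma sendRound_congr {P : Params} {Msg : Type} (Q : Protocol P Msg)
    {r r' : Run P} (hfp : r'.2 = r.2) {σ σ' : Fin P.N → LState P Msg}
    {i : Fin P.N} (hσ : σ' i = σ i) (t : ℕ) (j : Fin P.N) :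
    sendRound P Q r' σ' t i j = sendRound P Q r σ t i j := by
  unfold sendRound
  rw [hfp, hσ]

lemma sendRound_blocked {P : Params} {Msg : Type} (Q : Protocol P Msg)
    (r : Run P) (σ : Fin P.N → LState P Msg) (t : ℕ) (i j : Fin P.N)
    (hB : BlockedAt P r i j t) : sendRound P Q r σ t i j = none := by
  obtain ⟨x, hx, hcase⟩ := hB
  rw [Option.mem_def] at hx
  unfold sendRound
  rw [hx]
  split
  · rcases hcase with h1 | ⟨h1, h2⟩
    · simp [show ¬ t < x.1 by omega, show ¬ t = x.1 by omega]
    · simp [show ¬ t < x.1 by omega, h1.symm, h2]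
  · rfl

lemma state_eq (P : Params) {Msg : Type} (Q : Protocol P Msg) (r : Run P)
    (b : Bool) :
    ∀ t (p : Fin P.N), ¬ Chain P Q r (P.s, 0) (p, t) →
      stateAt P Q (b, r.2) t p = stateAt P Q r t p := by
  intro t
  induction t with
  | zero =>
    intro p hp
    have hps : p ≠ P.s := by
      intro hps
      exact hp (hps ▸ Chain.wait le_rfl)
    simp [stateAt, initVal, hps]
  | succ t ih =>
    intro p hp
    have hpt : ¬ Chain P Q r (P.s, 0) (p, t) := fun hch =>
      hp (chain_mono hch (Nat.le_succ t))
    have hσp : stateAt P Q (b, r.2) t p = stateAt P Q r t p := ih p hpt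
    have hsr : ∀ j, sendRound P Q (b, r.2) (stateAt P Q (b, r.2) t) t j p
        = sendRound P Q r (stateAt P Q r t) t j p := by
      intro j
      by_cases hcj : Chain P Q r (P.s, 0) (j, t)
      · have hnse : ¬ SendsE P Q r j p t := fun hs => hp (chain_snoc hcj hs)
        have hnA : ¬ SendsActual P Q r j p t := fun hA => hnse (Or.inl hA)
        have hrnone : sendRound P Q r (stateAt P Q r t) t j p = none := by
          have := (Option.not_isSome_iff_eq_none).mp hnA
          simpa [msgSent] using this
        rw [hrnone]
        by_cases hBl : BlockedAt P r j p t
        · exact sendRound_blocked Q (b, r.2) _ t j p hBl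
        · have hnN : ¬ SendsNull P Q r j p t := fun hN => hnse (Or.inr hN)
          have hnex : ¬ ∃ r'' : Run P, SendsActual P Q r'' j p t := fun hex =>
            hnN ⟨hBl, hnA, hex⟩
          have hA' : ¬ SendsActual P Q (b, r.2) j p t := fun hA =>
            hnex ⟨(b, r.2), hA⟩
          have := (Option.not_isSome_iff_eq_none).mp hA'
          simpa [msgSent] using this
      · exact sendRound_congr Q rfl (ih j hcj) t p
    have hev : (⟨fun j => sendRound P Q (b, r.2) (stateAt P Q (b, r.2) t) t p j,
          fun j => sendRound P Q (b, r.2) (stateAt P Q (b, r.2) t) t j p⟩ :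
            Event P Msg)
        = ⟨fun j => sendRound P Q r (stateAt P Q r t) t p j,
          fun j => sendRound P Q r (stateAt P Q r t) t j p⟩ := by
      congr 1
      · funext j
        exact sendRound_congr Q rfl hσp t j
      · funext j
        exact hsr j
    have hstep : stepState P Q (b, r.2) (stateAt P Q (b, r.2) t) t p
        = stepState P Q r (stateAt P Q r t) t p := by
      unfold stepState
      rw [hσp, hev]
    show stateAt P Q (b, r.2) (t + 1) p = stateAt P Q r (t + 1) p
    simp only [stateAt]
    cases hfp : r.2.fp p with
    | none => exact hstep
    | some x =>
      by_cases hxt : x.1 ≤ t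
      · simp only [hfp, if_pos hxt]
        exact hσp
      · simp only [hfp, if_neg hxt]
        exact hstep

/-- **Necessity of enhanced message chains.**  If `K_d(v_s = 1)` holds at
`(r,m)`, then there is an enhanced message chain from `⟨s,0⟩` to `⟨d,m⟩` in `r`. -/
theorem enhanced_chain_necessary (P : Params) {Msg : Type} (Q : Protocol P Msg)
    (r : Run P) (m : ℕ)
    (h : Kn P Q P.d (fun r' _ => r'.1 = true) r m) :
    Chain P Q r (P.s, 0) (P.d, m) := by
  by_contra hc
  have := h (false, r.2) (state_eq P Q r false m P.d hc)
  simp at this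

end NullMessages
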